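/- Let p be a prime with p ≡ 3 (mod 4), let K = GaloisField p 2, and let i ∈ K satisfy i² = −1. Let a, b, c, d ∈ ZMod p with (a, c) ≠ (0, 0), set α = (a : K) + (b : K)·i and β = (c : K) + (d : K)·i, and assume α ≠ β and b·c = a·d. Then a ≠ c and 2·(α + β)/(α − β) = ((2·(a + c))/(a − c) : K), i.e. the projective coefficients (α : β) and ((a : K) : (c : K)) represent the same affine Montgomery coefficient. -/
import Mathlib


/-- Lemma 1 of the paper: if `(a + ib : c + id)` is a projective
coefficient with `bc = ad`, then `(a : c)` represents the same affine Montgomery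
coefficient `2(α + β)/(α − β) = 2(a + c)/(a − c)`. -/
theorem stmt_6 (p : ℕ) [Fact p.Prime] (hp : p % 4 = 3)
    (i : GaloisField p 2) (hi : i ^ 2 = -1) (a b c d : ZMod p)
    (hac : (a, c) ≠ (0, 0))
    (hαβ : algebraMap (ZMod p) (GaloisField p 2) a + algebraMap (ZMod p) (GaloisField p 2) b * i ≠
      algebraMap (ZMod p) (GaloisField p 2) c + algebraMap (ZMod p) (GaloisField p 2) d * i)
    (hbcad : b * c = a * d) :
    a ≠ c ∧
      2 * ((algebraMap (ZMod p) (GaloisField p 2) a + algebraMap (ZMod p) (GaloisField p 2) b * i) +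
          (algebraMap (ZMod p) (GaloisField p 2) c + algebraMap (ZMod p) (GaloisField p 2) d * i)) /
        ((algebraMap (ZMod p) (GaloisField p 2) a + algebraMap (ZMod p) (GaloisField p 2) b * i) -
          (algebraMap (ZMod p) (GaloisField p 2) c + algebraMap (ZMod p) (GaloisField p 2) d * i)) =
        algebraMap (ZMod p) (GaloisField p 2) (2 * (a + c) / (a - c)) := by
  set f := algebraMap (ZMod p) (GaloisField p 2) with hf
  have hac' : a ≠ c := by
    rintro rfl
    rcases eq_or_ne a 0 with rfl | ha
    · exact hac rfl
    · have hbd : b = d := by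
        have h : b * a = d * a := by linear_combination hbcad
        exact mul_right_cancel₀ ha h
      exact hαβ (by rw [hbd])
  refine ⟨hac', ?_⟩
  have hαβ' : (f a + f b * i) - (f c + f d * i) ≠ 0 := sub_ne_zero.mpr hαβ
  have hfac : f a - f c ≠ 0 := by
    rw [← map_sub]
    simpa using fun h => hac' (sub_eq_zero.mp ((algebraMap (ZMod p) (GaloisField p 2)).injective (by simpa using h)))
  have hK : f b * f c = f a * f d := by
    rw [← map_mul, ← map_mul, hbcad]
  rw [map_div₀, map_mul, map_add, map_sub, map_ofNat, div_eq_div_iff hαβ' hfac]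
  ring_nf
  linear_combination (-4 * i) * hK
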